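/- arXiv:1009.5176 — 2 statements merged into one kernel-verified Lean document; each statement's English description precedes it below -/
import Mathlib

section
/- Third H-isomorphism theorem: if N and M are normal saturated sub-H-groups of an H-group P with N ⊆ M, then M/N is a normal subgroup of P/N and P/M ≅ (P/N)/(M/N). -/
open ContinuousMap

universe u v

/-- An H-group: a pointed space with continuous multiplication, homotopy inverse and the
constant map as homotopy identity, satisfying the H-group axioms up to pointed homotopy. -/
structure HGroup (P : Type u) [TopologicalSpace P] where
  pt : P
  mul : C(P × P, P)
  inv : C(P, P)
  mul_pt : mul (pt, pt) = pt
  inv_pt : inv pt = pt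
  left_id : HomotopicRel ⟨fun g => mul (pt, g), by fun_prop⟩ (ContinuousMap.id P) {pt}
  right_id : HomotopicRel ⟨fun g => mul (g, pt), by fun_prop⟩ (ContinuousMap.id P) {pt}
  left_inv : HomotopicRel ⟨fun g => mul (inv g, g), by fun_prop⟩ (const P pt) {pt}
  right_inv : HomotopicRel ⟨fun g => mul (g, inv g), by fun_prop⟩ (const P pt) {pt}
  assoc : HomotopicRel ⟨fun p : P × P × P => mul (mul (p.1, p.2.1), p.2.2), by fun_prop⟩
      ⟨fun p : P × P × P => mul (p.1, mul (p.2.1, p.2.2)), by fun_prop⟩ {(pt, pt, pt)}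

/-- `Jtn S g` : `g` homotopically belongs to `S`, i.e. there is a path in the ambient
space from `g` to a point of `S`. -/
def Jtn {P : Type u} [TopologicalSpace P] (S : Set P) (g : P) : Prop := ∃ s ∈ S, Joined g s

/-- The class of `g` in `π₀`. -/
def pc {P : Type u} [TopologicalSpace P] (g : P) : ZerothHomotopy P :=
  Quotient.mk (pathSetoid P) g

namespace HGroup
variable {P : Type u} [TopologicalSpace P]

/-- The left coset `g·S = {g' | η(g)·g' ∈̃ S}`. -/
def lcoset (H : HGroup P) (g : P) (S : Set P) : Set P :=
  {g' | Jtn S (H.mul (H.inv g, g'))}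

/-- The right coset `S·g = {g' | g'·η(g) ∈̃ S}`. -/
def rcoset (H : HGroup P) (S : Set P) (g : P) : Set P :=
  {g' | Jtn S (H.mul (g', H.inv g))}

/-- The pointwise product of two subsets. -/
def mulSet (H : HGroup P) (A B : Set P) : Set P := {p | ∃ a ∈ A, ∃ b ∈ B, p = H.mul (a, b)}

end HGroup

/-- A subset is saturated if it is a union of path components of the ambient space. -/
def Saturated {P : Type u} [TopologicalSpace P] (A : Set P) : Prop :=
  ∀ x ∈ A, ∀ y, Joined x y → y ∈ A

/-- A sub-H-group: a pointed subspace which is itself an H-group such that the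
inclusion is an H-homomorphism (via pointed homotopies). -/
structure SubHGroup {P : Type u} [TopologicalSpace P] (H : HGroup P) where
  carrier : Set P
  struct : HGroup carrier
  pt_val : (struct.pt : P) = H.pt
  incl_mul : HomotopicRel
    ⟨fun p : carrier × carrier => (struct.mul p : P), by fun_prop⟩
    ⟨fun p : carrier × carrier => H.mul (p.1, p.2), by fun_prop⟩
    {(struct.pt, struct.pt)}
  incl_inv : HomotopicRel
    ⟨fun x : carrier => (struct.inv x : P), by fun_prop⟩
    ⟨fun x : carrier => H.inv x, by fun_prop⟩
    {struct.pt}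

/-- A sub-H-group is normal if `g·n·g⁻¹` homotopically belongs to it for all `g`, `n`. -/
def SubHGroup.Normal {P : Type u} [TopologicalSpace P] {H : HGroup P}
    (N : SubHGroup H) : Prop :=
  ∀ g : P, ∀ n ∈ N.carrier, Jtn N.carrier (H.mul (H.mul (g, n), H.inv g))

/-- The set of left cosets of `S` in `P`. -/
def Cosets {P : Type u} [TopologicalSpace P] (H : HGroup P) (S : Set P) :=
  {T : Set P // ∃ g : P, T = H.lcoset g S}

/-- The left coset of `S` represented by `g`, as an element of `Cosets H S`. -/
def cst {P : Type u} [TopologicalSpace P] (H : HGroup P) (S : Set P) (g : P) : Cosets H S :=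
  ⟨H.lcoset g S, g, rfl⟩

/-- The coset equivalence relation: `g₁ ∼ g₂` iff `g₁·η(g₂) ∈̃ S`. -/
def cosetRel {P : Type u} [TopologicalSpace P] (H : HGroup P) (S : Set P)
    (g₁ g₂ : P) : Prop :=
  Jtn S (H.mul (g₁, H.inv g₂))

section Aux

variable {P : Type u} [TopologicalSpace P]

lemma homotopicRel_joined {X Y : Type*} [TopologicalSpace X] [TopologicalSpace Y]
    {f g : C(X, Y)} {S : Set X} (h : HomotopicRel f g S) (x : X) : Joined (f x) (g x) :=
  h.elim fun F => ⟨F.toHomotopy.evalAt x⟩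

lemma jmul (H : HGroup P) {a a' b b' : P} (ha : Joined a a') (hb : Joined b b') :
    Joined (H.mul (a, b)) (H.mul (a', b')) := by
  obtain ⟨p⟩ := ha; obtain ⟨q⟩ := hb
  exact ⟨(p.prod q).map H.mul.continuous⟩

lemma jl (H : HGroup P) (g : P) : Joined (H.mul (H.pt, g)) g :=
  homotopicRel_joined H.left_id g

lemma jr (H : HGroup P) (g : P) : Joined (H.mul (g, H.pt)) g :=
  homotopicRel_joined H.right_id g

lemma jinvl (H : HGroup P) (g : P) : Joined (H.mul (H.inv g, g)) H.pt :=
  homotopicRel_joined H.left_inv g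

lemma jassoc (H : HGroup P) (a b c : P) :
    Joined (H.mul (H.mul (a, b), c)) (H.mul (a, H.mul (b, c))) :=
  homotopicRel_joined H.assoc (a, b, c)

lemma jtn_mem {A : Set P} (hA : Saturated A) {x : P} (h : Jtn A x) : x ∈ A := by
  obtain ⟨s, hs, hj⟩ := h; exact hA s hs x hj.symm

lemma pt_mem {H : HGroup P} (M : SubHGroup H) : H.pt ∈ M.carrier :=
  M.pt_val ▸ M.struct.pt.2

lemma mul_mem {H : HGroup P} (M : SubHGroup H) (hMs : Saturated M.carrier) {g h : P}
    (hg : g ∈ M.carrier) (hh : h ∈ M.carrier) : H.mul (g, h) ∈ M.carrier := by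
  have := homotopicRel_joined M.incl_mul (⟨g, hg⟩, ⟨h, hh⟩)
  exact hMs _ (M.struct.mul (⟨g, hg⟩, ⟨h, hh⟩)).2 _ this

lemma inv_mem {H : HGroup P} (M : SubHGroup H) (hMs : Saturated M.carrier) {g : P}
    (hg : g ∈ M.carrier) : H.inv g ∈ M.carrier := by
  have := homotopicRel_joined M.incl_inv ⟨g, hg⟩
  exact hMs _ (M.struct.inv ⟨g, hg⟩).2 _ this

lemma mem_of_right {H : HGroup P} (M : SubHGroup H) (hMs : Saturated M.carrier) {g h : P}
    (hk : H.mul (g, H.inv h) ∈ M.carrier) (hh : h ∈ M.carrier) : g ∈ M.carrier := by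
  have h1 : Joined (H.mul (H.mul (g, H.inv h), h)) g :=
    ((jassoc H g (H.inv h) h).trans
      (jmul H (Joined.refl g) (jinvl H h))).trans (jr H g)
  exact hMs _ (mul_mem M hMs hk hh) _ h1

lemma mem_of_left {H : HGroup P} (M : SubHGroup H) (hMs : Saturated M.carrier) {g h : P}
    (hk : H.mul (g, H.inv h) ∈ M.carrier) (hg : g ∈ M.carrier) : h ∈ M.carrier := by
  set k := H.mul (g, H.inv h) with hkdef
  have h1 : Joined (H.mul (H.inv k, g)) h := by
    have s1 : Joined (H.mul (H.inv k, g)) (H.mul (H.inv k, H.mul (g, H.pt))) :=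
      jmul H (Joined.refl _) (jr H g).symm
    have s2 : Joined (H.mul (H.inv k, H.mul (g, H.pt)))
        (H.mul (H.inv k, H.mul (g, H.mul (H.inv h, h)))) :=
      jmul H (Joined.refl _) (jmul H (Joined.refl _) (jinvl H h).symm)
    have s3 : Joined (H.mul (H.inv k, H.mul (g, H.mul (H.inv h, h))))
        (H.mul (H.inv k, H.mul (k, h))) :=
      jmul H (Joined.refl _) (jassoc H g (H.inv h) h).symm
    have s4 : Joined (H.mul (H.inv k, H.mul (k, h))) (H.mul (H.mul (H.inv k, k), h)) :=
      (jassoc H (H.inv k) k h).symm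
    have s5 : Joined (H.mul (H.mul (H.inv k, k), h)) (H.mul (H.pt, h)) :=
      jmul H (jinvl H k) (Joined.refl _)
    exact ((((s1.trans s2).trans s3).trans s4).trans s5).trans (jl H h)
  exact hMs _ (mul_mem M hMs (inv_mem M hMs hk) hg) _ h1

lemma rel_mem_iff {H : HGroup P} (M N : SubHGroup H)
    (hMs : Saturated M.carrier) (hNs : Saturated N.carrier)
    (hsub : N.carrier ⊆ M.carrier) {g h : P} (hc : cosetRel H N.carrier g h) :
    (g ∈ M.carrier) = (h ∈ M.carrier) := by
  have hk : H.mul (g, H.inv h) ∈ M.carrier := hsub (jtn_mem hNs hc)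
  exact propext ⟨fun hg => mem_of_left M hMs hk hg, fun hh => mem_of_right M hMs hk hh⟩

/-- The membership predicate on P/N induced by `M.carrier`. -/
def memM {H : HGroup P} (M N : SubHGroup H)
    (hMs : Saturated M.carrier) (hNs : Saturated N.carrier)
    (hsub : N.carrier ⊆ M.carrier) : Quot (cosetRel H N.carrier) → Prop :=
  Quot.lift (· ∈ M.carrier) (fun _ _ hc => rel_mem_iff M N hMs hNs hsub hc)

lemma memS_iff {H : HGroup P} (M N : SubHGroup H)
    (hMs : Saturated M.carrier) (hNs : Saturated N.carrier)
    (hsub : N.carrier ⊆ M.carrier) (x : Quot (cosetRel H N.carrier)) :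
    (∃ g ∈ M.carrier, x = Quot.mk _ g) ↔ memM M N hMs hNs hsub x := by
  induction x using Quot.ind with
  | _ g =>
    constructor
    · rintro ⟨h, hh, he⟩
      have : memM M N hMs hNs hsub (Quot.mk _ h) = memM M N hMs hNs hsub (Quot.mk _ g) := by
        rw [he]
      exact this ▸ hh
    · intro hg; exact ⟨g, hg, rfl⟩

end Aux

/-- Third H-isomorphism theorem: for normal saturated sub-H-groups `N ⊆ M` of `P`,
`M/N` is a normal subgroup of `P/N` and `P/M ≅ (P/N)/(M/N)`. -/
theorem stmt_14 {P : Type u} [TopologicalSpace P] (H : HGroup P) (M N : SubHGroup H)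
    (hMs : Saturated M.carrier) (hNs : Saturated N.carrier)
    (hM : M.Normal) (hN : N.Normal) (hsub : N.carrier ⊆ M.carrier)
    (m : Quot (cosetRel H N.carrier) → Quot (cosetRel H N.carrier) →
      Quot (cosetRel H N.carrier))
    (hm : ∀ g h : P, m (Quot.mk _ g) (Quot.mk _ h) = Quot.mk _ (H.mul (g, h)))
    (i : Quot (cosetRel H N.carrier) → Quot (cosetRel H N.carrier))
    (hi : ∀ g : P, i (Quot.mk _ g) = Quot.mk _ (H.inv g))
    (mP : Quot (cosetRel H M.carrier) → Quot (cosetRel H M.carrier) →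
      Quot (cosetRel H M.carrier))
    (hmP : ∀ g h : P, mP (Quot.mk _ g) (Quot.mk _ h) = Quot.mk _ (H.mul (g, h)))
    (m₂ : Quot (fun x y : Quot (cosetRel H N.carrier) =>
        m x (i y) ∈ {x : Quot (cosetRel H N.carrier) | ∃ g ∈ M.carrier, x = Quot.mk _ g}) →
      Quot (fun x y : Quot (cosetRel H N.carrier) =>
        m x (i y) ∈ {x : Quot (cosetRel H N.carrier) | ∃ g ∈ M.carrier, x = Quot.mk _ g}) →
      Quot (fun x y : Quot (cosetRel H N.carrier) =>
        m x (i y) ∈ {x : Quot (cosetRel H N.carrier) | ∃ g ∈ M.carrier, x = Quot.mk _ g}))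
    (hm₂ : ∀ x y : Quot (cosetRel H N.carrier),
      m₂ (Quot.mk _ x) (Quot.mk _ y) = Quot.mk _ (m x y)) :
    (Quot.mk (cosetRel H N.carrier) H.pt ∈
        {x : Quot (cosetRel H N.carrier) | ∃ g ∈ M.carrier, x = Quot.mk _ g}) ∧
    (∀ x ∈ {x : Quot (cosetRel H N.carrier) | ∃ g ∈ M.carrier, x = Quot.mk _ g},
      ∀ y ∈ {x : Quot (cosetRel H N.carrier) | ∃ g ∈ M.carrier, x = Quot.mk _ g},
        m x y ∈ {x : Quot (cosetRel H N.carrier) | ∃ g ∈ M.carrier, x = Quot.mk _ g}) ∧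
    (∀ x ∈ {x : Quot (cosetRel H N.carrier) | ∃ g ∈ M.carrier, x = Quot.mk _ g},
      i x ∈ {x : Quot (cosetRel H N.carrier) | ∃ g ∈ M.carrier, x = Quot.mk _ g}) ∧
    (∀ x : Quot (cosetRel H N.carrier),
      ∀ y ∈ {x : Quot (cosetRel H N.carrier) | ∃ g ∈ M.carrier, x = Quot.mk _ g},
        m (m x y) (i x) ∈
          {x : Quot (cosetRel H N.carrier) | ∃ g ∈ M.carrier, x = Quot.mk _ g}) ∧
    ∃ θ : Quot (cosetRel H M.carrier) ≃
        Quot (fun x y : Quot (cosetRel H N.carrier) =>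
          m x (i y) ∈ {x : Quot (cosetRel H N.carrier) | ∃ g ∈ M.carrier, x = Quot.mk _ g}),
      (∀ g : P, θ (Quot.mk _ g) = Quot.mk _ (Quot.mk _ g)) ∧
      ∀ a b, θ (mP a b) = m₂ (θ a) (θ b) := by
  have memS : ∀ g : P, (Quot.mk (cosetRel H N.carrier) g ∈
      {x : Quot (cosetRel H N.carrier) | ∃ g ∈ M.carrier, x = Quot.mk _ g}) ↔
      g ∈ M.carrier := by
    intro g
    rw [Set.mem_setOf_eq, memS_iff M N hMs hNs hsub]
    exact Iff.rfl
  refine ⟨⟨H.pt, pt_mem M, rfl⟩, ?_, ?_, ?_, ?_⟩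
  · rintro x ⟨g, hg, rfl⟩ y ⟨h, hh, rfl⟩
    rw [hm]
    exact ⟨H.mul (g, h), mul_mem M hMs hg hh, rfl⟩
  · rintro x ⟨g, hg, rfl⟩
    rw [hi]
    exact ⟨H.inv g, inv_mem M hMs hg, rfl⟩
  · intro x y hy
    induction x using Quot.ind with
    | _ g =>
      obtain ⟨h, hh, rfl⟩ := hy
      rw [hm, hi, hm]
      exact ⟨H.mul (H.mul (g, h), H.inv g), jtn_mem hMs (hM g h hh), rfl⟩
  · have sound1 : ∀ g h : P, cosetRel H M.carrier g h →
        Quot.mk (fun x y : Quot (cosetRel H N.carrier) =>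
          m x (i y) ∈ {x : Quot (cosetRel H N.carrier) | ∃ g ∈ M.carrier, x = Quot.mk _ g})
          (Quot.mk _ g) = Quot.mk _ (Quot.mk _ h) := by
      intro g h hc
      apply Quot.sound
      show m (Quot.mk _ g) (i (Quot.mk _ h)) ∈ _
      rw [hi, hm]
      exact ⟨H.mul (g, H.inv h), jtn_mem hMs hc, rfl⟩
    have sound2 : ∀ g h : P, cosetRel H N.carrier g h →
        Quot.mk (cosetRel H M.carrier) g = Quot.mk (cosetRel H M.carrier) h := by
      intro g h hc
      apply Quot.sound
      obtain ⟨s, hs, hj⟩ := hc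
      exact ⟨s, hsub hs, hj⟩
    have sound3 : ∀ x y : Quot (cosetRel H N.carrier),
        (m x (i y) ∈ {x : Quot (cosetRel H N.carrier) | ∃ g ∈ M.carrier, x = Quot.mk _ g}) →
        Quot.lift (fun g => Quot.mk (cosetRel H M.carrier) g) sound2 x =
        Quot.lift (fun g => Quot.mk (cosetRel H M.carrier) g) sound2 y := by
      intro x y
      induction x using Quot.ind with
      | _ g =>
        induction y using Quot.ind with
        | _ h =>
          intro hrel
          rw [hi, hm] at hrel
          have hk : H.mul (g, H.inv h) ∈ M.carrier := (memS _).mp hrel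
          exact Quot.sound ⟨_, hk, Joined.refl _⟩
    refine ⟨⟨Quot.lift (fun g => Quot.mk _ (Quot.mk _ g)) sound1,
      Quot.lift (Quot.lift (fun g => Quot.mk (cosetRel H M.carrier) g) sound2) sound3,
      ?_, ?_⟩, fun g => rfl, ?_⟩
    · intro a
      induction a using Quot.ind with
      | _ g => rfl
    · intro a
      induction a using Quot.ind with
      | _ x =>
        induction x using Quot.ind with
        | _ g => rfl
    · intro a b
      induction a using Quot.ind with
      | _ g =>
        induction b using Quot.ind with
        | _ h =>
          show Quot.lift (fun g => Quot.mk _ (Quot.mk _ g)) sound1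
              (mP (Quot.mk _ g) (Quot.mk _ h)) = _
          rw [hmP g h]
          show Quot.mk _ (Quot.mk _ (H.mul (g, h))) =
            m₂ (Quot.mk _ (Quot.mk _ g)) (Quot.mk _ (Quot.mk _ h))
          rw [hm₂, hm]
end

section
/- Let P be an H-group each of whose path components is open (equivalently, P is 0-semilocally simply connected), and let N be a normal sub-H-group of P. Then the quotient P/N, endowed with the quotient topology induced by the canonical map π : P → P/N, is a discrete topological group; in particular the canonical map π is continuous, open, and a group homomorphism onto P/N. -/
open ContinuousMap

universe u v

lemma homotopic_joined {X : Type u} {Y : Type v} [TopologicalSpace X] [TopologicalSpace Y]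
    {f g : C(X, Y)} (h : f.Homotopic g) (x : X) : Joined (f x) (g x) := by
  obtain ⟨F⟩ := h
  exact ⟨⟨⟨fun t => F (t, x), by fun_prop⟩, F.apply_zero x, F.apply_one x⟩⟩

/-- The group structure on `π₀` of an H-group. -/
noncomputable def HGroupAux.pi0Group {P : Type u} [TopologicalSpace P] (H : HGroup P) :
    Group (ZerothHomotopy P) where
  mul := Quotient.map₂ (fun a b => H.mul (a, b))
    (fun a a' ha b b' hb => ⟨(ha.somePath.prod hb.somePath).map H.mul.continuous⟩)
  one := pc H.pt
  inv := Quotient.map (fun a => H.inv a) (fun a a' ha => ⟨ha.somePath.map H.inv.continuous⟩)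
  mul_assoc a b c := by
    obtain ⟨a⟩ := a
    obtain ⟨b⟩ := b
    obtain ⟨c⟩ := c
    refine Quotient.sound ?_
    obtain ⟨F⟩ := H.assoc
    exact homotopic_joined ⟨F.toHomotopy⟩ (a, b, c)
  one_mul a := by
    obtain ⟨a⟩ := a
    refine Quotient.sound ?_
    obtain ⟨F⟩ := H.left_id
    exact homotopic_joined ⟨F.toHomotopy⟩ a
  mul_one a := by
    obtain ⟨a⟩ := a
    refine Quotient.sound ?_
    obtain ⟨F⟩ := H.right_id
    exact homotopic_joined ⟨F.toHomotopy⟩ a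
  inv_mul_cancel a := by
    obtain ⟨a⟩ := a
    refine Quotient.sound ?_
    obtain ⟨F⟩ := H.left_inv
    exact homotopic_joined ⟨F.toHomotopy⟩ a


/-- For a 0-semilocally simply connected H-group `P` (all path components open) and a
normal sub-H-group `N`, the quotient `P/N` with the quotient topology is a discrete
topological group, and the canonical map is a continuous open surjective homomorphism. -/
theorem stmt_19 {P : Type u} [TopologicalSpace P] (H : HGroup P)
    (hopen : ∀ x : P, IsOpen (pathComponent x)) (N : SubHGroup H) (hN : N.Normal) :
    Continuous (Quot.mk (cosetRel H N.carrier)) ∧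
    IsOpenMap (Quot.mk (cosetRel H N.carrier)) ∧
    Function.Surjective (Quot.mk (cosetRel H N.carrier)) ∧
    DiscreteTopology (Quot (cosetRel H N.carrier)) ∧
    ∃ m : Quot (cosetRel H N.carrier) → Quot (cosetRel H N.carrier) →
        Quot (cosetRel H N.carrier),
    ∃ i : Quot (cosetRel H N.carrier) → Quot (cosetRel H N.carrier),
      (∀ g h : P, m (Quot.mk _ g) (Quot.mk _ h) = Quot.mk _ (H.mul (g, h))) ∧
      (∀ g : P, i (Quot.mk _ g) = Quot.mk _ (H.inv g)) ∧
      (∀ a b c, m (m a b) c = m a (m b c)) ∧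
      (∀ a, m (Quot.mk _ H.pt) a = a) ∧
      (∀ a, m a (Quot.mk _ H.pt) = a) ∧
      (∀ a, m (i a) a = Quot.mk _ H.pt) ∧
      (∀ a, m a (i a) = Quot.mk _ H.pt) ∧
      Continuous (fun p : Quot (cosetRel H N.carrier) × Quot (cosetRel H N.carrier) =>
        m p.1 p.2) ∧
      Continuous i := by
  letI : Group (ZerothHomotopy P) := HGroupAux.pi0Group H
  have pcmul : ∀ a b : P, pc (H.mul (a, b)) = pc a * pc b := fun a b => by
    with_unfolding_all rfl
  have pcinv : ∀ a : P, pc (H.inv a) = (pc a)⁻¹ := fun a => by with_unfolding_all rfl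
  have pcone : (1 : ZerothHomotopy P) = pc H.pt := by with_unfolding_all rfl
  -- the image of N in π₀ is closed under the group operations
  have mem_one : (1 : ZerothHomotopy P) ∈ pc '' N.carrier := by
    refine ⟨(N.struct.pt : P), (N.struct.pt).2, ?_⟩
    rw [pcone]
    exact congrArg pc N.pt_val
  have mem_mul : ∀ x y : ZerothHomotopy P, x ∈ pc '' N.carrier → y ∈ pc '' N.carrier →
      x * y ∈ pc '' N.carrier := by
    rintro _ _ ⟨n₁, hn₁, rfl⟩ ⟨n₂, hn₂, rfl⟩
    obtain ⟨F⟩ := N.incl_mul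
    have j := homotopic_joined ⟨F.toHomotopy⟩ (⟨n₁, hn₁⟩, ⟨n₂, hn₂⟩)
    refine ⟨_, (N.struct.mul (⟨n₁, hn₁⟩, ⟨n₂, hn₂⟩)).2, ?_⟩
    rw [← pcmul]
    exact Quotient.sound j
  have mem_inv : ∀ x : ZerothHomotopy P, x ∈ pc '' N.carrier → x⁻¹ ∈ pc '' N.carrier := by
    rintro _ ⟨n, hn, rfl⟩
    obtain ⟨F⟩ := N.incl_inv
    have j := homotopic_joined ⟨F.toHomotopy⟩ ⟨n, hn⟩
    refine ⟨_, (N.struct.inv ⟨n, hn⟩).2, ?_⟩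
    rw [← pcinv]
    exact Quotient.sound j
  have mem_conj : ∀ y x : ZerothHomotopy P, x ∈ pc '' N.carrier →
      y * x * y⁻¹ ∈ pc '' N.carrier := by
    intro y x hx
    obtain ⟨g⟩ := y
    obtain ⟨n, hn, rfl⟩ := hx
    obtain ⟨s, hs, hj⟩ := hN g n hn
    refine ⟨s, hs, ?_⟩
    show pc s = pc g * pc n * (pc g)⁻¹
    rw [← pcinv, ← pcmul, ← pcmul]
    exact (Quotient.sound hj).symm
  -- characterization of the relation
  have hJtn : ∀ (S : Set P) (g : P), Jtn S g ↔ pc g ∈ pc '' S := by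
    intro S g
    constructor
    · rintro ⟨s, hs, j⟩
      exact ⟨s, hs, Quotient.sound j.symm⟩
    · rintro ⟨s, hs, e⟩
      exact ⟨s, hs, Quotient.exact e.symm⟩
  have hRiff : ∀ a b : P, cosetRel H N.carrier a b ↔
      pc a * (pc b)⁻¹ ∈ pc '' N.carrier := by
    intro a b
    show Jtn N.carrier (H.mul (a, H.inv b)) ↔ _
    rw [hJtn, pcmul, pcinv]
  have hequiv : Equivalence (cosetRel H N.carrier) := by
    refine ⟨fun a => ?_, fun {a b} h => ?_, fun {a b c} h1 h2 => ?_⟩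
    · exact (hRiff a a).mpr (by rw [mul_inv_cancel]; exact mem_one)
    · rw [hRiff] at h ⊢
      have e : pc b * (pc a)⁻¹ = (pc a * (pc b)⁻¹)⁻¹ := by group
      rw [e]; exact mem_inv _ h
    · rw [hRiff] at h1 h2 ⊢
      have e : pc a * (pc c)⁻¹ = (pc a * (pc b)⁻¹) * (pc b * (pc c)⁻¹) := by group
      rw [e]; exact mem_mul _ _ h1 h2
  have hQeq : ∀ a b : P, Quot.mk (cosetRel H N.carrier) a = Quot.mk (cosetRel H N.carrier) b
      ↔ cosetRel H N.carrier a b := by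
    intro a b
    rw [Quot.eq]
    exact hequiv.eqvGen_iff
  have hsound : ∀ a b : P, pc a = pc b →
      Quot.mk (cosetRel H N.carrier) a = Quot.mk (cosetRel H N.carrier) b := by
    intro a b h
    exact Quot.sound ((hRiff a b).mpr (by rw [h, mul_inv_cancel]; exact mem_one))
  -- preimages under pc are open
  have hpreopen : ∀ T : Set (ZerothHomotopy P), IsOpen (pc ⁻¹' T) := by
    intro T
    rw [isOpen_iff_forall_mem_open]
    intro x hx
    refine ⟨pathComponent x, ?_, hopen x, mem_pathComponent_self x⟩
    intro y hy
    have h2 : pc y = pc x := (Quotient.sound (hy : Joined x y)).symm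
    show pc y ∈ T
    rw [h2]; exact hx
  have hdisc : DiscreteTopology (Quot (cosetRel H N.carrier)) := by
    rw [discreteTopology_iff_isOpen_singleton]
    intro q
    obtain ⟨a⟩ := q
    rw [← isQuotientMap_quot_mk.isOpen_preimage]
    have e : Quot.mk (cosetRel H N.carrier) ⁻¹' {Quot.mk (cosetRel H N.carrier) a}
        = pc ⁻¹' {x | x * (pc a)⁻¹ ∈ pc '' N.carrier} := by
      ext g
      simp only [Set.mem_preimage, Set.mem_singleton_iff, Set.mem_setOf_eq]
      rw [hQeq, hRiff]
    rw [e]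
    exact hpreopen _
  haveI := hdisc
  -- well-definedness of multiplication and inverse
  have hml : ∀ a a' b : P, cosetRel H N.carrier a a' →
      cosetRel H N.carrier (H.mul (a, b)) (H.mul (a', b)) := by
    intro a a' b h
    rw [hRiff] at h ⊢
    have e : pc (H.mul (a, b)) * (pc (H.mul (a', b)))⁻¹ = pc a * (pc a')⁻¹ := by
      rw [pcmul, pcmul]; group
    rw [e]; exact h
  have hmr : ∀ a b b' : P, cosetRel H N.carrier b b' →
      cosetRel H N.carrier (H.mul (a, b)) (H.mul (a, b')) := by
    intro a b b' h
    rw [hRiff] at h ⊢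
    have e : pc (H.mul (a, b)) * (pc (H.mul (a, b')))⁻¹
        = pc a * (pc b * (pc b')⁻¹) * (pc a)⁻¹ := by
      rw [pcmul, pcmul]; group
    rw [e]; exact mem_conj _ _ h
  have hinv : ∀ a a' : P, cosetRel H N.carrier a a' →
      cosetRel H N.carrier (H.inv a) (H.inv a') := by
    intro a a' h
    rw [hRiff] at h ⊢
    have e : pc (H.inv a) * (pc (H.inv a'))⁻¹
        = (pc a)⁻¹ * (pc a * (pc a')⁻¹)⁻¹ * ((pc a)⁻¹)⁻¹ := by
      rw [pcinv, pcinv]; group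
    rw [e]; exact mem_conj _ _ (mem_inv _ h)
  refine ⟨continuous_quot_mk, fun U _ => isOpen_discrete _, Quot.mk_surjective, hdisc,
    Quot.lift (fun a => Quot.lift (fun b => Quot.mk (cosetRel H N.carrier) (H.mul (a, b)))
        (fun b b' hb => Quot.sound (hmr a b b' hb)))
      (fun a a' ha => funext fun q => Quot.inductionOn q fun b => Quot.sound (hml a a' b ha)),
    Quot.lift (fun a => Quot.mk (cosetRel H N.carrier) (H.inv a))
      (fun a a' ha => Quot.sound (hinv a a' ha)),
    fun g h => rfl, fun g => rfl, ?_, ?_, ?_, ?_, ?_,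
    continuous_of_discreteTopology, continuous_of_discreteTopology⟩
  · intro a b c
    obtain ⟨a⟩ := a
    obtain ⟨b⟩ := b
    obtain ⟨c⟩ := c
    show Quot.mk _ (H.mul (H.mul (a, b), c)) = Quot.mk _ (H.mul (a, H.mul (b, c)))
    apply hsound
    rw [pcmul, pcmul, pcmul, pcmul]
    exact mul_assoc _ _ _
  · intro a
    obtain ⟨a⟩ := a
    show Quot.mk _ (H.mul (H.pt, a)) = Quot.mk _ a
    apply hsound
    rw [pcmul, ← pcone, one_mul]
  · intro a
    obtain ⟨a⟩ := a
    show Quot.mk _ (H.mul (a, H.pt)) = Quot.mk _ a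
    apply hsound
    rw [pcmul, ← pcone, mul_one]
  · intro a
    obtain ⟨a⟩ := a
    show Quot.mk _ (H.mul (H.inv a, a)) = Quot.mk _ H.pt
    apply hsound
    rw [pcmul, pcinv, inv_mul_cancel, pcone]
  · intro a
    obtain ⟨a⟩ := a
    show Quot.mk _ (H.mul (a, H.inv a)) = Quot.mk _ H.pt
    apply hsound
    rw [pcmul, pcinv, mul_inv_cancel, pcone]
end
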